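/- With the same compound Poisson setup, E[‖Z_R‖] ≥ e^{-λ} λ E[‖Z_1‖], where λ = ν({‖u‖ > R}). In particular, for the α-stable Lévy measure with α ∈ (1,2), (σ_1/((α-1) R^{α-1})) e^{-σ_1/(α R^α)} ≤ E[‖Z_R‖] ≤ σ_1/((α-1) R^{α-1}). -/

import Mathlib

open MeasureTheory ProbabilityTheory Set

/-- tail of the α-stable measure -/
lemma cp_tail {d : ℕ} (ν : Measure (EuclideanSpace ℝ (Fin d))) (α σ1 : ℝ)
    (hα1 : 1 < α) (hσ : 0 < σ1)
    (σ : Measure (Metric.sphere (0 : EuclideanSpace ℝ (Fin d)) 1)) [IsFiniteMeasure σ]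
    (hσ1 : σ1 = (σ Set.univ).toReal)
    (hν : ∀ B : Set (EuclideanSpace ℝ (Fin d)), MeasurableSet B →
      ν B = ∫⁻ ξ, (∫⁻ r in Set.Ioi (0 : ℝ),
        B.indicator (fun _ => ENNReal.ofReal (r ^ (-1 - α)))
          (r • (ξ : EuclideanSpace ℝ (Fin d)))) ∂σ)
    {t : ℝ} (ht : 0 < t) :
    ν {u | t < ‖u‖} = ENNReal.ofReal (σ1 * (t ^ (-α) / α)) := by
  have hα0 : 0 < α := by linarith
  have hB : MeasurableSet {u : EuclideanSpace ℝ (Fin d) | t < ‖u‖} :=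
    measurableSet_lt measurable_const measurable_norm
  rw [hν _ hB]
  have hinner : ∀ ξ : Metric.sphere (0 : EuclideanSpace ℝ (Fin d)) 1,
      (∫⁻ r in Set.Ioi (0 : ℝ),
        ({u : EuclideanSpace ℝ (Fin d) | t < ‖u‖}).indicator
          (fun _ => ENNReal.ofReal (r ^ (-1 - α)))
          (r • (ξ : EuclideanSpace ℝ (Fin d))))
        = ENNReal.ofReal (t ^ (-α) / α) := by
    intro ξ
    have hstep : ∀ r ∈ Set.Ioi (0:ℝ),
        ({u : EuclideanSpace ℝ (Fin d) | t < ‖u‖}).indicator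
          (fun _ => ENNReal.ofReal (r ^ (-1 - α)))
          (r • (ξ : EuclideanSpace ℝ (Fin d)))
        = (Set.Ioi t).indicator (fun r : ℝ => ENNReal.ofReal (r ^ (-1 - α))) r := by
      intro r hr
      have hnorm : ‖r • (ξ : EuclideanSpace ℝ (Fin d))‖ = r := by
        rw [norm_smul, norm_eq_of_mem_sphere ξ, Real.norm_eq_abs,
          abs_of_pos (mem_Ioi.mp hr), mul_one]
      by_cases h : t < r
      · rw [Set.indicator_of_mem (by simpa [hnorm] using h),
          Set.indicator_of_mem (by exact h)]
      · rw [Set.indicator_of_notMem (by simpa [hnorm] using h),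
          Set.indicator_of_notMem (by exact h)]
    rw [setLIntegral_congr_fun measurableSet_Ioi hstep,
      lintegral_indicator measurableSet_Ioi _, Measure.restrict_restrict measurableSet_Ioi,
      Set.Ioi_inter_Ioi, max_eq_left ht.le]
    rw [← ofReal_integral_eq_lintegral_ofReal
        (integrableOn_Ioi_rpow_of_lt (by linarith) ht)
        ((ae_restrict_iff' measurableSet_Ioi).mpr (Filter.Eventually.of_forall
          fun r hr => Real.rpow_nonneg (ht.trans hr).le _))]
    rw [integral_Ioi_rpow_of_lt (by linarith) ht]
    congr 1
    have : (-1 - α) + 1 = -α := by ring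
    rw [this]
    field_simp
  rw [lintegral_congr hinner, lintegral_const]
  have hσu : σ Set.univ = ENNReal.ofReal σ1 := by
    rw [hσ1, ENNReal.ofReal_toReal (measure_ne_top σ _)]
  rw [hσu, mul_comm, ← ENNReal.ofReal_mul hσ.le]

lemma cp_moment {d : ℕ} (ν : Measure (EuclideanSpace ℝ (Fin d))) (α σ1 R : ℝ)
    (hα1 : 1 < α) (hσ : 0 < σ1) (hR : 0 < R)
    (htail : ∀ t : ℝ, 0 < t → ν {u | t < ‖u‖} = ENNReal.ofReal (σ1 * (t ^ (-α) / α))) :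
    ∫⁻ u, ENNReal.ofReal ‖u‖ ∂(ν.restrict {u | R < ‖u‖})
      = ENNReal.ofReal (σ1 * R ^ (1 - α) / (α - 1)) := by
  have hα0 : 0 < α := by linarith
  have hmeas : ∀ t : ℝ, MeasurableSet {u : EuclideanSpace ℝ (Fin d) | t < ‖u‖} := fun t =>
    measurableSet_lt measurable_const measurable_norm
  rw [lintegral_eq_lintegral_meas_lt _ (Filter.Eventually.of_forall fun u => norm_nonneg u)
    measurable_norm.aemeasurable]
  have hres : ∀ t ∈ Set.Ioi (0:ℝ),
      ν.restrict {u | R < ‖u‖} {u | t < ‖u‖}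
        = ENNReal.ofReal (σ1 * ((max t R) ^ (-α) / α)) := by
    intro t _
    rw [Measure.restrict_apply (hmeas t)]
    have hset : {u : EuclideanSpace ℝ (Fin d) | t < ‖u‖} ∩ {u | R < ‖u‖}
        = {u | max t R < ‖u‖} := by
      ext u; simp [max_lt_iff]
    rw [hset, htail _ (lt_max_of_lt_right hR)]
  rw [setLIntegral_congr_fun measurableSet_Ioi hres]
  rw [show Set.Ioi (0:ℝ) = Set.Ioc 0 R ∪ Set.Ioi R from (Set.Ioc_union_Ioi_eq_Ioi hR.le).symm,
    lintegral_union measurableSet_Ioi (Set.Ioc_disjoint_Ioi le_rfl)]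
  have h1 : ∫⁻ t in Set.Ioc (0:ℝ) R, ENNReal.ofReal (σ1 * ((max t R) ^ (-α) / α))
      = ENNReal.ofReal (σ1 * (R ^ (-α) / α) * R) := by
    rw [setLIntegral_congr_fun measurableSet_Ioc
      (fun t ht => by rw [max_eq_right ht.2])]
    rw [setLIntegral_const, Real.volume_Ioc, ← ENNReal.ofReal_mul
      (by positivity), sub_zero]
  have h2 : ∫⁻ t in Set.Ioi R, ENNReal.ofReal (σ1 * ((max t R) ^ (-α) / α))
      = ENNReal.ofReal (σ1 / α * (R ^ (1 - α) / (α - 1))) := by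
    rw [setLIntegral_congr_fun measurableSet_Ioi
      (fun t ht => by rw [max_eq_left (le_of_lt ht), show σ1 * (t ^ (-α) / α) = σ1 / α * t ^ (-α) by ring])]
    rw [← ofReal_integral_eq_lintegral_ofReal
      (((integrableOn_Ioi_rpow_of_lt (by linarith) hR).const_mul (σ1 / α)))
      ((ae_restrict_iff' measurableSet_Ioi).mpr (Filter.Eventually.of_forall
        fun t ht => by have h0t : (0:ℝ) < t := hR.trans ht; positivity))]
    rw [MeasureTheory.integral_const_mul, integral_Ioi_rpow_of_lt (by linarith) hR]
    congr 1
    rw [show -α + 1 = 1 - α by ring]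
    have h1α : (1:ℝ) - α ≠ 0 := by intro h; linarith
    have h2α : α - (1:ℝ) ≠ 0 := by intro h; linarith
    field_simp
    ring
  have hA : (0:ℝ) < α - 1 := by linarith
  rw [h1, h2, ← ENNReal.ofReal_add (by positivity) (by positivity)]
  congr 1
  have hrw : R ^ (1 - α) = R ^ (-α) * R := by
    rw [show (1 : ℝ) - α = -α + 1 by ring, Real.rpow_add hR, Real.rpow_one]
  rw [hrw]
  have hαne : α ≠ 0 := hα0.ne'
  have hα1ne : α - 1 ≠ 0 := by intro h; linarith [sub_eq_zero.mp h]
  field_simp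
  ring

lemma cp_poisson_mean (lam : ℝ) (hlam0 : 0 < lam) :
    ∑' n : ℕ, (n : ENNReal) * ENNReal.ofReal (Real.exp (-lam) * lam ^ n / (Nat.factorial n : ℝ))
      = ENNReal.ofReal lam := by
  have hterm : ∀ n : ℕ, (n : ENNReal) * ENNReal.ofReal (Real.exp (-lam) * lam ^ n / (Nat.factorial n : ℝ))
      = ENNReal.ofReal ((n : ℝ) * (Real.exp (-lam) * lam ^ n / (Nat.factorial n : ℝ))) := by
    intro n
    rw [ENNReal.ofReal_mul (Nat.cast_nonneg n), ENNReal.ofReal_natCast]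
  have hshift : ∀ n : ℕ, ((n + 1 : ℕ) : ℝ) * (Real.exp (-lam) * lam ^ (n+1) / (Nat.factorial (n+1) : ℝ))
      = Real.exp (-lam) * lam * (lam ^ n / (Nat.factorial n : ℝ)) := by
    intro n
    rw [Nat.factorial_succ, pow_succ]
    push_cast
    have h1 : (Nat.factorial n : ℝ) ≠ 0 := Nat.cast_ne_zero.mpr (Nat.factorial_ne_zero n)
    have h2 : ((n:ℝ) + 1) ≠ 0 := by positivity
    field_simp
  have hg : Summable (fun n : ℕ => lam ^ n / (Nat.factorial n : ℝ)) :=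
    Real.summable_pow_div_factorial lam
  have hsum : Summable (fun n : ℕ => (n : ℝ) * (Real.exp (-lam) * lam ^ n / (Nat.factorial n : ℝ))) := by
    rw [← summable_nat_add_iff 1]
    exact Summable.congr ((hg.mul_left (Real.exp (-lam) * lam))) (fun n => (hshift n).symm)
  simp_rw [hterm]
  rw [← ENNReal.ofReal_tsum_of_nonneg (fun n => by positivity) hsum]
  congr 1
  rw [hsum.tsum_eq_zero_add]
  simp only [Nat.cast_zero, zero_mul, zero_add]
  rw [tsum_congr hshift, tsum_mul_left]
  have hexp : ∑' n : ℕ, lam ^ n / (Nat.factorial n : ℝ) = Real.exp lam := by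
    rw [Real.exp_eq_exp_ℝ, NormedSpace.exp_eq_tsum_div]
  rw [hexp, mul_comm (Real.exp (-lam)) lam, mul_assoc, ← Real.exp_add]
  simp

lemma cp_indep_piece {Ω : Type*} [MeasureSpace Ω] [IsProbabilityMeasure (ℙ : Measure Ω)]
    {E : Type*} [NormedAddCommGroup E] [MeasurableSpace E] [OpensMeasurableSpace E]
    (N : Ω → ℕ) (X : Ω → E) (hN : Measurable N) (hX : Measurable X)
    (h : IndepFun N X ℙ) (n : ℕ) :
    ∫⁻ ω in {ω | N ω = n}, ENNReal.ofReal ‖X ω‖ ∂ℙ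
      = ℙ {ω | N ω = n} * ∫⁻ ω, ENNReal.ofReal ‖X ω‖ ∂ℙ := by
  have hs : MeasurableSet {ω | N ω = n} := hN (measurableSet_singleton n)
  have hind : IndepFun (fun ω => ({n} : Set ℕ).indicator (fun _ => (1:ENNReal)) (N ω))
      (fun ω => ENNReal.ofReal ‖X ω‖) ℙ :=
    h.comp (Measurable.indicator measurable_const (measurableSet_singleton n))
      (ENNReal.measurable_ofReal.comp measurable_norm)
  have hmul := lintegral_mul_eq_lintegral_mul_lintegral_of_indepFun
    ((Measurable.indicator measurable_const (measurableSet_singleton n)).comp hN)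
    (ENNReal.measurable_ofReal.comp hX.norm) hind
  have heq : ∀ ω, (({n} : Set ℕ).indicator (fun _ => (1:ENNReal)) (N ω))
      * ENNReal.ofReal ‖X ω‖
      = ({ω | N ω = n} : Set Ω).indicator (fun ω => ENNReal.ofReal ‖X ω‖) ω := by
    intro ω
    by_cases hω : N ω = n <;> simp [Set.indicator_apply, hω]
  have h1 : ∫⁻ ω, ({n} : Set ℕ).indicator (fun _ => (1:ENNReal)) (N ω) ∂ℙ
      = ℙ {ω | N ω = n} := by
    have : ∀ ω, ({n} : Set ℕ).indicator (fun _ => (1:ENNReal)) (N ω)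
        = ({ω | N ω = n} : Set Ω).indicator (fun _ => (1:ENNReal)) ω := by
      intro ω; by_cases hω : N ω = n <;> simp [Set.indicator_apply, hω]
    rw [lintegral_congr this, lintegral_indicator hs, setLIntegral_one]
  simp only [Pi.mul_apply, Function.comp_apply] at hmul
  rw [← lintegral_indicator hs]
  rw [lintegral_congr (fun ω => (heq ω).symm)]
  rw [hmul, h1]

theorem compound_poisson_expected_norm_two_sided
    {Ω : Type*} [MeasureSpace Ω] [IsProbabilityMeasure (ℙ : Measure Ω)]
    {d : ℕ} (ν : Measure (EuclideanSpace ℝ (Fin d))) (α σ1 R lam : ℝ)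
    (hα1 : 1 < α) (hα2 : α < 2) (hσ : 0 < σ1) (hR : 0 < R) (hlam0 : 0 < lam)
    (σ : Measure (Metric.sphere (0 : EuclideanSpace ℝ (Fin d)) 1)) [IsFiniteMeasure σ]
    (hσ1 : σ1 = (σ Set.univ).toReal)
    (hν : ∀ B : Set (EuclideanSpace ℝ (Fin d)), MeasurableSet B →
      ν B = ∫⁻ ξ, (∫⁻ r in Set.Ioi (0 : ℝ),
        B.indicator (fun _ => ENNReal.ofReal (r ^ (-1 - α)))
          (r • (ξ : EuclideanSpace ℝ (Fin d)))) ∂σ)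
    (N : Ω → ℕ) (Z : ℕ → Ω → EuclideanSpace ℝ (Fin d))
    (hNmeas : Measurable N) (hZmeas : ∀ k, Measurable (Z k))
    (hlam : ENNReal.ofReal lam = ν {u | R < ‖u‖})
    (hlaw : ∀ k : ℕ, 1 ≤ k →
      Measure.map (Z k) ℙ = (ENNReal.ofReal lam)⁻¹ • ν.restrict {u | R < ‖u‖})
    (hiid : iIndepFun Z ℙ)
    (hNindep : IndepFun N (fun ω k => Z k ω) ℙ)
    (hPoisson : ∀ n : ℕ,
      ℙ {ω | N ω = n} = ENNReal.ofReal (Real.exp (-lam) * lam ^ n / (Nat.factorial n : ℝ))) :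
    Real.exp (-lam) * (lam * ∫ ω, ‖Z 1 ω‖) ≤ (∫ ω, ‖∑ k ∈ Finset.Icc 1 (N ω), Z k ω‖) ∧
      σ1 / ((α - 1) * R ^ (α - 1)) * Real.exp (-(σ1 / (α * R ^ α)))
        ≤ (∫ ω, ‖∑ k ∈ Finset.Icc 1 (N ω), Z k ω‖) ∧
      (∫ ω, ‖∑ k ∈ Finset.Icc 1 (N ω), Z k ω‖) ≤ σ1 / ((α - 1) * R ^ (α - 1)) := by
  have hα0 : 0 < α := by linarith
  have hαm1 : 0 < α - 1 := by linarith
  set c0 : ℝ := σ1 * R ^ (1 - α) / (α - 1) with hc0def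
  have hc0pos : 0 < c0 := by
    have := Real.rpow_pos_of_pos hR (1 - α); positivity
  have htail : ∀ t : ℝ, 0 < t → ν {u | t < ‖u‖} = ENNReal.ofReal (σ1 * (t ^ (-α) / α)) :=
    fun t ht => cp_tail ν α σ1 hα1 hσ σ hσ1 hν ht
  -- value of lam
  have hlamval : lam = σ1 * (R ^ (-α) / α) := by
    have h := hlam.trans (htail R hR)
    have hpos : 0 ≤ σ1 * (R ^ (-α) / α) := by
      have := Real.rpow_pos_of_pos hR (-α); positivity
    exact (ENNReal.ofReal_eq_ofReal_iff hlam0.le hpos).mp h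
  -- the tail moment
  have hmom : ∫⁻ u, ENNReal.ofReal ‖u‖ ∂(ν.restrict {u | R < ‖u‖}) = ENNReal.ofReal c0 :=
    cp_moment ν α σ1 R hα1 hσ hR htail
  -- expectation of each Z k
  set E1 : ENNReal := (ENNReal.ofReal lam)⁻¹ * ENNReal.ofReal c0 with hE1def
  have hE : ∀ k : ℕ, 1 ≤ k → ∫⁻ ω, ENNReal.ofReal ‖Z k ω‖ ∂ℙ = E1 := by
    intro k hk
    rw [← lintegral_map measurable_norm.ennreal_ofReal (hZmeas k),
      hlaw k hk, lintegral_smul_measure, hmom, smul_eq_mul]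
  have hlamne0 : ENNReal.ofReal lam ≠ 0 := by
    simp [ENNReal.ofReal_eq_zero, not_le, hlam0]
  have hlamnetop : ENNReal.ofReal lam ≠ ⊤ := ENNReal.ofReal_ne_top
  have hE1top : E1 ≠ ⊤ := by
    rw [hE1def]
    exact ENNReal.mul_ne_top (ENNReal.inv_ne_top.mpr hlamne0) ENNReal.ofReal_ne_top
  have hlamE1 : ENNReal.ofReal lam * E1 = ENNReal.ofReal c0 := by
    rw [hE1def, ← mul_assoc, ENNReal.mul_inv_cancel hlamne0 hlamnetop, one_mul]
  -- measurability of the random sum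
  set f : Ω → EuclideanSpace ℝ (Fin d) := fun ω => ∑ k ∈ Finset.Icc 1 (N ω), Z k ω with hfdef
  have hfmeas : Measurable f := by
    have hg : Measurable (fun p : Ω × ℕ => ∑ k ∈ Finset.Icc 1 p.2, Z k p.1) := by
      apply measurable_from_prod_countable_left
      intro n
      exact Finset.measurable_sum (Finset.Icc 1 n) (fun k _ => hZmeas k)
    exact hg.comp (measurable_id.prodMk hNmeas)
  -- partition
  set s : ℕ → Set Ω := fun n => {ω | N ω = n} with hsdef
  have hsmeas : ∀ n, MeasurableSet (s n) := fun n => hNmeas (measurableSet_singleton n)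
  have hsdisj : Pairwise (Function.onFun Disjoint s) := by
    intro m n hmn
    simp only [Function.onFun, Set.disjoint_left]
    intro ω hm hn
    exact hmn (hm.symm.trans hn)
  have hsunion : (⋃ n, s n) = Set.univ := by
    ext ω; simp [hsdef]
  set L : ENNReal := ∫⁻ ω, ENNReal.ofReal ‖f ω‖ ∂ℙ with hLdef
  have hLpart : L = ∑' n, ∫⁻ ω in s n, ENNReal.ofReal ‖f ω‖ ∂ℙ := by
    rw [hLdef, ← setLIntegral_univ, ← hsunion, lintegral_iUnion hsmeas hsdisj]
  -- each individual Z k expectation piece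
  have hZindep : ∀ k : ℕ, IndepFun N (Z k) ℙ := by
    intro k
    have : Z k = (fun v : ℕ → EuclideanSpace ℝ (Fin d) => v k) ∘ (fun ω k => Z k ω) := rfl
    rw [this]
    exact hNindep.comp measurable_id (measurable_pi_apply k)
  have hpiece : ∀ n k : ℕ, 1 ≤ k →
      ∫⁻ ω in s n, ENNReal.ofReal ‖Z k ω‖ ∂ℙ = ℙ (s n) * E1 := by
    intro n k hk
    rw [hsdef]
    rw [cp_indep_piece N (Z k) hNmeas (hZmeas k) (hZindep k) n, hE k hk]
  -- upper bound
  have hUBpiece : ∀ n : ℕ, ∫⁻ ω in s n, ENNReal.ofReal ‖f ω‖ ∂ℙ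
      ≤ (n : ENNReal) * ℙ (s n) * E1 := by
    intro n
    have hcong : ∀ ω ∈ s n, ENNReal.ofReal ‖f ω‖
        = ENNReal.ofReal ‖∑ k ∈ Finset.Icc 1 n, Z k ω‖ := by
      intro ω hω
      simp only [hsdef, Set.mem_setOf_eq] at hω
      rw [hfdef]; simp only [hω]
    rw [setLIntegral_congr_fun (hsmeas n) hcong]
    have hle : ∀ ω, ENNReal.ofReal ‖∑ k ∈ Finset.Icc 1 n, Z k ω‖
        ≤ ∑ k ∈ Finset.Icc 1 n, ENNReal.ofReal ‖Z k ω‖ := by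
      intro ω
      calc ENNReal.ofReal ‖∑ k ∈ Finset.Icc 1 n, Z k ω‖
          ≤ ENNReal.ofReal (∑ k ∈ Finset.Icc 1 n, ‖Z k ω‖) :=
            ENNReal.ofReal_le_ofReal (norm_sum_le _ _)
        _ = ∑ k ∈ Finset.Icc 1 n, ENNReal.ofReal ‖Z k ω‖ :=
            ENNReal.ofReal_sum_of_nonneg (fun k _ => norm_nonneg _)
    calc ∫⁻ ω in s n, ENNReal.ofReal ‖∑ k ∈ Finset.Icc 1 n, Z k ω‖ ∂ℙ
        ≤ ∫⁻ ω in s n, ∑ k ∈ Finset.Icc 1 n, ENNReal.ofReal ‖Z k ω‖ ∂ℙ :=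
          lintegral_mono hle
      _ = ∑ k ∈ Finset.Icc 1 n, ∫⁻ ω in s n, ENNReal.ofReal ‖Z k ω‖ ∂ℙ :=
          lintegral_finset_sum _ (fun k _ => ENNReal.measurable_ofReal.comp (hZmeas k).norm)
      _ = ∑ k ∈ Finset.Icc 1 n, ℙ (s n) * E1 :=
          Finset.sum_congr rfl (fun k hk => hpiece n k (Finset.mem_Icc.mp hk).1)
      _ = (n : ENNReal) * ℙ (s n) * E1 := by
          rw [Finset.sum_const, Nat.card_Icc]
          simp [nsmul_eq_mul, mul_assoc]
  have hUB : L ≤ ENNReal.ofReal c0 := by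
    calc L = ∑' n, ∫⁻ ω in s n, ENNReal.ofReal ‖f ω‖ ∂ℙ := hLpart
      _ ≤ ∑' n : ℕ, (n : ENNReal) * ℙ (s n) * E1 := ENNReal.tsum_le_tsum hUBpiece
      _ = (∑' n : ℕ, (n : ENNReal) * ℙ (s n)) * E1 := ENNReal.tsum_mul_right
      _ = ENNReal.ofReal lam * E1 := by
          congr 1
          have : ∀ n : ℕ, (n : ENNReal) * ℙ (s n)
              = (n : ENNReal) * ENNReal.ofReal (Real.exp (-lam) * lam ^ n / (Nat.factorial n : ℝ)) := by
            intro n; rw [hsdef, hPoisson n]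
          rw [tsum_congr this, cp_poisson_mean lam hlam0]
      _ = ENNReal.ofReal c0 := hlamE1
  have hLtop : L ≠ ⊤ := (hUB.trans_lt ENNReal.ofReal_lt_top).ne
  -- lower bound
  have hLB : ℙ (s 1) * E1 ≤ L := by
    have hcong : ∀ ω ∈ s 1, ENNReal.ofReal ‖f ω‖ = ENNReal.ofReal ‖Z 1 ω‖ := by
      intro ω hω
      simp only [hsdef, Set.mem_setOf_eq] at hω
      rw [hfdef]; simp only [hω, Finset.Icc_self, Finset.sum_singleton]
    calc ℙ (s 1) * E1 = ∫⁻ ω in s 1, ENNReal.ofReal ‖Z 1 ω‖ ∂ℙ := (hpiece 1 1 le_rfl).symm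
      _ = ∫⁻ ω in s 1, ENNReal.ofReal ‖f ω‖ ∂ℙ :=
          (setLIntegral_congr_fun (hsmeas 1) hcong).symm
      _ ≤ L := setLIntegral_le_lintegral _ _
  -- convert Bochner integrals
  have hint1 : (∫ ω, ‖f ω‖) = L.toReal := by
    rw [integral_eq_lintegral_of_nonneg_ae (Filter.Eventually.of_forall fun ω => norm_nonneg _)
      hfmeas.norm.aestronglyMeasurable]
  have hint2 : (∫ ω, ‖Z 1 ω‖) = E1.toReal := by
    rw [integral_eq_lintegral_of_nonneg_ae (Filter.Eventually.of_forall fun ω => norm_nonneg _)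
      (hZmeas 1).norm.aestronglyMeasurable, hE 1 le_rfl]
  have hE1toReal : E1.toReal = c0 / lam := by
    rw [hE1def, ENNReal.toReal_mul, ENNReal.toReal_inv, ENNReal.toReal_ofReal hlam0.le,
      ENNReal.toReal_ofReal hc0pos.le]
    ring
  -- the three bounds in ℝ
  have hLBreal : Real.exp (-lam) * lam * (c0 / lam) ≤ L.toReal := by
    have h := ENNReal.toReal_mono hLtop hLB
    rw [ENNReal.toReal_mul, hE1toReal, hsdef, hPoisson 1,
      ENNReal.toReal_ofReal (by positivity)] at h
    simpa [pow_one] using h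
  have hUBreal : L.toReal ≤ c0 := by
    have h := ENNReal.toReal_mono ENNReal.ofReal_ne_top hUB
    rwa [ENNReal.toReal_ofReal hc0pos.le] at h
  -- rpow arithmetic
  have hRα : (0:ℝ) < R ^ α := Real.rpow_pos_of_pos hR α
  have hRα1 : (0:ℝ) < R ^ (α - 1) := Real.rpow_pos_of_pos hR (α - 1)
  have hc0' : c0 = σ1 / ((α - 1) * R ^ (α - 1)) := by
    rw [hc0def, show (1:ℝ) - α = -(α - 1) by ring, Real.rpow_neg hR.le]
    rw [eq_div_iff (by positivity)]
    field_simp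
  have hlam' : σ1 / (α * R ^ α) = lam := by
    rw [hlamval, Real.rpow_neg hR.le]
    rw [div_eq_iff (by positivity)]
    field_simp
  have hkey : Real.exp (-lam) * lam * (c0 / lam) = Real.exp (-lam) * c0 := by
    field_simp
  refine ⟨?_, ?_, ?_⟩
  · rw [hint1, hint2, hE1toReal, ← mul_assoc]
    exact hLBreal
  · rw [hint1, ← hc0', hlam']
    calc c0 * Real.exp (-lam) = Real.exp (-lam) * lam * (c0 / lam) := by
          rw [hkey]; ring
      _ ≤ L.toReal := hLBreal
  · rw [hint1, ← hc0']
    exact hUBreal
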